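/- arXiv:2106.03147 — 3 statements merged into one kernel-verified Lean document; each statement's English description precedes it below -/
import Mathlib

section
/- Let K : M → (0,∞) be a measurable function on a measure space (M, μ) with a measure-preserving transformation f, and suppose that for a.e. x the sum ∑_{n ∈ ℤ} K(f^n x) e^{-ε|n|} is finite. Then there exists a measurable function K_ε : M → (0,∞) with K(x) ≤ K_ε(x) and e^{-ε} K_ε(x) ≤ K_ε(f x) ≤ e^{ε} K_ε(x) for a.e. x. -/
set_option maxHeartbeats 1000000


open MeasureTheory

/-- If `K : M → (0,∞)` is measurable and for a.e. `x` the sum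
`∑_{n ∈ ℤ} K(fⁿ x) e^{-ε|n|}` is finite, then there is a measurable
function `K_ε ≥ K` which is `ε`-tempered along orbits:
`e^{-ε} K_ε(x) ≤ K_ε(f x) ≤ e^{ε} K_ε(x)` a.e. -/
theorem exists_tempered_dominating_function {M : Type*} [MeasurableSpace M]
    (μ : Measure M) (f : Equiv.Perm M)
    (hf : Measurable (f : M → M)) (hfsymm : Measurable (f.symm : M → M))
    (hpres : MeasurePreserving (f : M → M) μ μ)
    (ε : ℝ) (hε : 0 < ε) (K : M → ℝ) (hK : Measurable K) (hKpos : ∀ x, 0 < K x)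
    (hsum : ∀ᵐ x ∂μ, Summable fun n : ℤ => K ((f ^ n) x) * Real.exp (-ε * |(n : ℝ)|)) :
    ∃ Kε : M → ℝ, Measurable Kε ∧
      ∀ᵐ x ∂μ, 0 < Kε x ∧ K x ≤ Kε x ∧
        Real.exp (-ε) * Kε x ≤ Kε (f x) ∧ Kε (f x) ≤ Real.exp ε * Kε x := by
  -- measurability of integer powers of f
  have hmeas : ∀ n : ℤ, Measurable ((f ^ n : Equiv.Perm M) : M → M) := by
    intro n
    induction n using Int.induction_on with
    | zero => simpa using measurable_id
    | succ n ih =>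
        have : ((f ^ ((n : ℤ) + 1) : Equiv.Perm M) : M → M)
            = ((f ^ (n : ℤ) : Equiv.Perm M) : M → M) ∘ (f : M → M) := by
          ext x; simp only [Function.comp_apply, zpow_add_one, Equiv.Perm.mul_apply]
        rw [this]; exact ih.comp hf
    | pred n ih =>
        have : ((f ^ (-(n : ℤ) - 1) : Equiv.Perm M) : M → M)
            = ((f ^ (-(n : ℤ)) : Equiv.Perm M) : M → M) ∘ (f.symm : M → M) := by
          ext x; simp only [Function.comp_apply, zpow_sub_one, Equiv.Perm.mul_apply, Equiv.Perm.inv_def]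
        rw [this]; exact ih.comp hfsymm
  set g : M → ℤ → ℝ := fun x n => K ((f ^ n) x) * Real.exp (-ε * |(n : ℝ)|) with hg
  have hgpos : ∀ x n, 0 < g x n := fun x n =>
    mul_pos (hKpos _) (Real.exp_pos _)
  have hgnn : ∀ x n, 0 ≤ g x n := fun x n => (hgpos x n).le
  -- shift identity
  have hshift : ∀ x (n : ℤ), g (f x) n = K ((f ^ (n + 1)) x) * Real.exp (-ε * |(n : ℝ)|) := by
    intro x n
    have : (f ^ (n + 1)) x = (f ^ n) (f x) := by
      rw [zpow_add_one]; rfl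
    simp [hg, this]
  -- termwise bounds
  have hub : ∀ x (n : ℤ), g (f x) n ≤ Real.exp ε * g x (n + 1) := by
    intro x n
    rw [hshift]
    have h1 : Real.exp (-ε * |(n : ℝ)|) ≤ Real.exp ε * Real.exp (-ε * |((n : ℝ) + 1)|) := by
      rw [← Real.exp_add]
      apply Real.exp_le_exp.2
      have habs : |((n : ℝ) + 1)| ≤ |(n : ℝ)| + 1 := by
        calc |((n : ℝ) + 1)| ≤ |(n : ℝ)| + |(1 : ℝ)| := abs_add_le _ _
        _ = |(n : ℝ)| + 1 := by norm_num
      nlinarith [hε.le]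
    have := mul_le_mul_of_nonneg_left h1 (hKpos ((f ^ (n + 1)) x)).le
    calc K ((f ^ (n + 1)) x) * Real.exp (-ε * |(n : ℝ)|)
        ≤ K ((f ^ (n + 1)) x) * (Real.exp ε * Real.exp (-ε * |((n : ℝ) + 1)|)) := this
      _ = Real.exp ε * g x (n + 1) := by push_cast [hg]; ring
  have hlb : ∀ x (n : ℤ), Real.exp (-ε) * g x (n + 1) ≤ g (f x) n := by
    intro x n
    rw [hshift]
    have h1 : Real.exp (-ε) * Real.exp (-ε * |((n : ℝ) + 1)|) ≤ Real.exp (-ε * |(n : ℝ)|) := by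
      rw [← Real.exp_add]
      apply Real.exp_le_exp.2
      have habs : |(n : ℝ)| ≤ |((n : ℝ) + 1)| + 1 := by
        calc |(n : ℝ)| = |((n : ℝ) + 1) + (-1)| := by ring_nf
        _ ≤ |((n : ℝ) + 1)| + |(-1 : ℝ)| := abs_add_le _ _
        _ = |((n : ℝ) + 1)| + 1 := by norm_num
      nlinarith [hε.le]
    have := mul_le_mul_of_nonneg_left h1 (hKpos ((f ^ (n + 1)) x)).le
    calc Real.exp (-ε) * g x (n + 1)
        = K ((f ^ (n + 1)) x) * (Real.exp (-ε) * Real.exp (-ε * |((n : ℝ) + 1)|)) := by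
          push_cast [hg]; ring
      _ ≤ K ((f ^ (n + 1)) x) * Real.exp (-ε * |(n : ℝ)|) := this
  -- definition of Kε
  set Kε : M → ℝ := fun x => (∑' n : ℤ, ENNReal.ofReal (g x n)).toReal with hKε
  have hKεmeas : Measurable Kε := by
    apply Measurable.ennreal_toReal
    apply Measurable.ennreal_tsum
    intro n
    exact ((hK.comp (hmeas n)).mul measurable_const).ennreal_ofReal
  refine ⟨Kε, hKεmeas, ?_⟩
  filter_upwards [hsum] with x hx
  -- summability
  have hxsum : Summable (g x) := hx
  have hxshift : Summable (fun n : ℤ => g x (n + 1)) :=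
    ((Equiv.addRight (1 : ℤ)).summable_iff.2 hxsum)
  have hfxsum : Summable (g (f x)) := by
    apply Summable.of_nonneg_of_le (fun n => hgnn _ n) (fun n => hub x n)
    exact hxshift.mul_left _
  -- identify Kε with the real tsum where summable
  have hid : ∀ y : M, Summable (g y) → Kε y = ∑' n : ℤ, g y n := by
    intro y hy
    rw [hKε]
    simp only
    rw [← ENNReal.ofReal_tsum_of_nonneg (hgnn y) hy,
      ENNReal.toReal_ofReal (tsum_nonneg (hgnn y))]
  have hx' : Kε x = ∑' n : ℤ, g x n := hid x hxsum
  have hfx' : Kε (f x) = ∑' n : ℤ, g (f x) n := hid (f x) hfxsum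
  have hshiftsum : ∑' n : ℤ, g x (n + 1) = ∑' n : ℤ, g x n :=
    (Equiv.addRight (1 : ℤ)).tsum_eq (g x)
  constructor
  · rw [hx']
    calc (0 : ℝ) < g x 0 := hgpos x 0
      _ ≤ ∑' n : ℤ, g x n := Summable.le_tsum hxsum 0 fun i _ => hgnn x i
  constructor
  · rw [hx']
    have h0 : K x ≤ g x 0 := by simp [hg]
    exact h0.trans (Summable.le_tsum hxsum 0 fun i _ => hgnn x i)
  constructor
  · rw [hx', hfx']
    calc Real.exp (-ε) * ∑' n : ℤ, g x n
        = ∑' n : ℤ, Real.exp (-ε) * g x (n + 1) := by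
          rw [tsum_mul_left, hshiftsum]
      _ ≤ ∑' n : ℤ, g (f x) n :=
          Summable.tsum_le_tsum (fun n => hlb x n) (hxshift.mul_left _) hfxsum
  · rw [hx', hfx']
    calc ∑' n : ℤ, g (f x) n
        ≤ ∑' n : ℤ, Real.exp ε * g x (n + 1) :=
          Summable.tsum_le_tsum (fun n => hub x n) hfxsum (hxshift.mul_left _)
      _ = Real.exp ε * ∑' n : ℤ, g x n := by rw [tsum_mul_left, hshiftsum]
end

section
/- Let f be a measure-preserving map of a compact metric probability space (M, μ) which is exponentially mixing for C^r observables with rate η, i.e. |∫ φ (ψ∘f^n) dμ − ∫φ dμ ∫ψ dμ| ≤ C e^{-ηn} ‖φ‖_{C^r} ‖ψ‖_{C^r}. If μ is not supported on a single point, then there exist constants c, η̂ > 0 such that for every measurable set B ⊂ M with μ(B) ≥ 1 − c and every n ∈ ℕ, there exists z ∈ B with diam(f^n(O_{e^{-η̂ n}}(z))) ≥ c, where O_r(z) is the ball of radius r centered at z. -/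
open MeasureTheory Metric
open scoped NNReal ENNReal

private lemma bump_lipschitz {M : Type*} [MetricSpace M] (s : Set M) (k : ℝ) (hk : 0 ≤ k) :
    LipschitzWith (Real.toNNReal k) (fun x => max 0 (1 - k * Metric.infDist x s)) := by
  apply LipschitzWith.of_dist_le_mul
  intro x y
  have h1 : |Metric.infDist x s - Metric.infDist y s| ≤ dist x y := by
    rw [abs_sub_le_iff]
    constructor
    · linarith [Metric.infDist_le_infDist_add_dist (x := x) (y := y) (s := s)]
    · linarith [Metric.infDist_le_infDist_add_dist (x := y) (y := x) (s := s), dist_comm x y]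
  calc dist (max 0 (1 - k * Metric.infDist x s)) (max 0 (1 - k * Metric.infDist y s))
      = |max (1 - k * Metric.infDist x s) 0 - max (1 - k * Metric.infDist y s) 0| := by
        rw [Real.dist_eq, max_comm 0 _, max_comm 0 _]
    _ ≤ |(1 - k * Metric.infDist x s) - (1 - k * Metric.infDist y s)| :=
        abs_max_sub_max_le_abs _ _ _
    _ = k * |Metric.infDist x s - Metric.infDist y s| := by
        rw [show (1 - k * Metric.infDist x s) - (1 - k * Metric.infDist y s)
          = k * (Metric.infDist y s - Metric.infDist x s) by ring, abs_mul,
          abs_of_nonneg hk, abs_sub_comm]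
    _ ≤ k * dist x y := mul_le_mul_of_nonneg_left h1 hk
    _ = (Real.toNNReal k : ℝ) * dist x y := by rw [Real.coe_toNNReal k hk]

private lemma cont_integrable {M : Type*} [MetricSpace M] [CompactSpace M] [MeasurableSpace M]
    [BorelSpace M] (μ : Measure M) [IsFiniteMeasure μ] {g : M → ℝ} (hg : Continuous g) :
    Integrable g μ :=
  integrableOn_univ.mp (hg.continuousOn.integrableOn_compact isCompact_univ)

private lemma integral_ge_meas {M : Type*} [MetricSpace M] [CompactSpace M] [MeasurableSpace M]
    [BorelSpace M] (μ : Measure M) [IsFiniteMeasure μ]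
    {g : M → ℝ} (hg : Integrable g μ) (h0 : ∀ x, 0 ≤ g x)
    {s : Set M} (hs : MeasurableSet s) {c : ℝ} (h1 : ∀ x ∈ s, c ≤ g x) :
    c * (μ s).toReal ≤ ∫ x, g x ∂μ :=
  le_trans (setIntegral_ge_of_const_le_real hs (measure_ne_top μ s) h1 hg.integrableOn)
    (setIntegral_le_integral hg (Filter.Eventually.of_forall h0))

private lemma core_bound {M : Type*} [MetricSpace M] [CompactSpace M] [MeasurableSpace M]
    [BorelSpace M] (μ : Measure M) [IsProbabilityMeasure μ]
    (f : M → M) (C η : ℝ) (hC : 0 < C)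
    (hmix : ∀ (φ ψ : M → ℝ) (a b : ℝ≥0), LipschitzWith a φ → LipschitzWith b ψ →
      (∀ x, |φ x| ≤ a) → (∀ x, |ψ x| ≤ b) → ∀ n : ℕ,
      |(∫ x, φ x * ψ (f^[n] x) ∂μ) - (∫ x, φ x ∂μ) * ∫ x, ψ x ∂μ|
        ≤ C * Real.exp (-η * n) * a * b)
    (w : M) (R : ℝ) (hR : 0 < R)
    (T : Set M) (hT : MeasurableSet T) (n : ℕ) (r : ℝ) (hr0 : 0 < r) (hr1 : r ≤ 1)
    (havoid : ∀ z ∈ T, ∀ x, dist x z < r → R ≤ dist (f^[n] x) w) :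
    (μ T).toReal * ((μ (ball w (R/2))).toReal / 2)
      ≤ C * Real.exp (-η * n) * (2 / r) * max (1 / R) 1 := by
  have hrpos : (0:ℝ) < 2 / r := by positivity
  have hbb : (0:ℝ) < max (1/R) 1 := lt_max_of_lt_right one_pos
  rcases T.eq_empty_or_nonempty with hTe | hTne
  · rw [hTe]
    simp only [measure_empty, ENNReal.toReal_zero, zero_mul]
    positivity
  set φ : M → ℝ := fun x => max 0 (1 - (2/r) * Metric.infDist x T) with hφ
  set ψ : M → ℝ := fun x => max 0 (1 - (1/R) * Metric.infDist x {w}) with hψ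
  set a : ℝ≥0 := Real.toNNReal (2/r) with ha
  set b : ℝ≥0 := Real.toNNReal (max (1/R) 1) with hb
  have hacoe : (a : ℝ) = 2/r := Real.coe_toNNReal _ hrpos.le
  have hbcoe : (b : ℝ) = max (1/R) 1 := Real.coe_toNNReal _ hbb.le
  have lipφ : LipschitzWith a φ := bump_lipschitz T _ hrpos.le
  have lipψ : LipschitzWith b ψ := by
    refine (bump_lipschitz {w} (1/R) (by positivity)).weaken ?_
    exact Real.toNNReal_le_toNNReal (le_max_left _ _)
  have φ0 : ∀ x, 0 ≤ φ x := fun x => le_max_left _ _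
  have ψ0 : ∀ x, 0 ≤ ψ x := fun x => le_max_left _ _
  have φ1 : ∀ x, φ x ≤ 1 := by
    intro x
    apply max_le (by norm_num)
    have : 0 ≤ (2/r) * Metric.infDist x T := mul_nonneg hrpos.le Metric.infDist_nonneg
    linarith
  have ψ1 : ∀ x, ψ x ≤ 1 := by
    intro x
    apply max_le (by norm_num)
    have : 0 ≤ (1/R) * Metric.infDist x {w} :=
      mul_nonneg (by positivity) Metric.infDist_nonneg
    linarith
  have boundφ : ∀ x, |φ x| ≤ (a:ℝ) := by
    intro x
    rw [abs_of_nonneg (φ0 x), hacoe]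
    have h2 : (1:ℝ) ≤ 2/r := by rw [one_le_div hr0]; linarith
    exact le_trans (φ1 x) h2
  have boundψ : ∀ x, |ψ x| ≤ (b:ℝ) := by
    intro x
    rw [abs_of_nonneg (ψ0 x), hbcoe]
    exact le_trans (ψ1 x) (le_max_right _ _)
  have hzero : ∀ x, φ x * ψ (f^[n] x) = 0 := by
    intro x
    rcases lt_or_ge (Metric.infDist x T) (r/2) with h | h
    · obtain ⟨z, hzT, hxz⟩ := (Metric.infDist_lt_iff hTne).1 (h.trans (half_lt_self hr0))
      have hRd := havoid z hzT x hxz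
      have hpsi : ψ (f^[n] x) = 0 := by
        rw [hψ]
        simp only
        apply max_eq_left
        rw [Metric.infDist_singleton]
        have h1 : (1:ℝ) ≤ (1/R) * dist (f^[n] x) w := by
          rw [one_div, ← div_eq_inv_mul, one_le_div hR]
          exact hRd
        linarith
      rw [hpsi, mul_zero]
    · have hphi : φ x = 0 := by
        rw [hφ]
        simp only
        apply max_eq_left
        have h1 : (2/r) * (r/2) ≤ (2/r) * Metric.infDist x T :=
          mul_le_mul_of_nonneg_left h hrpos.le
        have h2 : (2/r) * (r/2) = 1 := by field_simp
        linarith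
      rw [hphi, zero_mul]
  have hintzero : (∫ x, φ x * ψ (f^[n] x) ∂μ) = 0 := by
    have : (fun x => φ x * ψ (f^[n] x)) = fun _ => (0:ℝ) := funext hzero
    rw [this, integral_zero]
  have intφ0 : 0 ≤ ∫ x, φ x ∂μ := integral_nonneg φ0
  have intψ0 : 0 ≤ ∫ x, ψ x ∂μ := integral_nonneg ψ0
  have hmix' := hmix φ ψ a b lipφ lipψ boundφ boundψ n
  rw [hintzero, zero_sub, abs_neg, abs_of_nonneg (mul_nonneg intφ0 intψ0)] at hmix'
  have h1 : (μ T).toReal ≤ ∫ x, φ x ∂μ := by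
    have := integral_ge_meas μ (cont_integrable μ lipφ.continuous) φ0 hT (c := 1)
      (fun x hx => by
        rw [hφ]; simp only
        rw [Metric.infDist_zero_of_mem hx]; simp)
    simpa using this
  have h2 : (μ (ball w (R/2))).toReal / 2 ≤ ∫ x, ψ x ∂μ := by
    have := integral_ge_meas μ (cont_integrable μ lipψ.continuous) ψ0 measurableSet_ball
      (c := 1/2) (s := ball w (R/2))
      (fun x hx => by
        rw [hψ]; simp only
        rw [Metric.infDist_singleton]
        have hd : dist x w < R/2 := mem_ball.mp hx
        have h5 : (1/R) * dist x w ≤ (1/R) * (R/2) :=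
          mul_le_mul_of_nonneg_left hd.le (by positivity)
        have h6 : (1/R) * (R/2) = 1/2 := by field_simp
        exact le_max_of_le_right (by linarith))
    linarith
  calc (μ T).toReal * ((μ (ball w (R/2))).toReal / 2)
      ≤ (∫ x, φ x ∂μ) * ∫ x, ψ x ∂μ :=
        mul_le_mul h1 h2 (by positivity) intφ0
    _ ≤ C * Real.exp (-η * n) * (2/r) * max (1/R) 1 := by
        rw [hacoe, hbcoe] at hmix'; exact hmix'

private lemma exists_two_support_points {M : Type*} [MetricSpace M] [CompactSpace M]
    [MeasurableSpace M] [BorelSpace M] (μ : Measure M) [IsProbabilityMeasure μ]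
    (hsupp : ∀ z : M, μ ≠ Measure.dirac z) :
    ∃ u v : M, u ≠ v ∧ (∀ ε > (0:ℝ), 0 < μ (ball u ε)) ∧ (∀ ε > (0:ℝ), 0 < μ (ball v ε)) := by
  set S : Set M := {x | ∀ ε > (0:ℝ), 0 < μ (ball x ε)} with hS
  have hSc : μ Sᶜ = 0 := by
    obtain ⟨T, hTc, hTsub, hTeq⟩ := TopologicalSpace.isOpen_sUnion_countable
      {t : Set M | IsOpen t ∧ μ t = 0} (fun t ht => ht.1)
    have hsub : Sᶜ ⊆ ⋃₀ T := by
      rw [hTeq]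
      intro x hx
      rw [Set.mem_compl_iff, hS, Set.mem_setOf_eq] at hx
      push_neg at hx
      obtain ⟨ε, hε, hμ⟩ := hx
      exact ⟨ball x ε, ⟨isOpen_ball, le_zero_iff.mp hμ⟩, mem_ball_self hε⟩
    exact measure_mono_null hsub ((measure_sUnion_null_iff hTc).2 fun t ht => (hTsub ht).2)
  have hSne : S.Nonempty := by
    rw [Set.nonempty_iff_ne_empty]
    intro h
    rw [h, Set.compl_empty] at hSc
    simp at hSc
  have h2 : ∃ u ∈ S, ∃ v ∈ S, u ≠ v := by
    by_contra h
    push_neg at h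
    obtain ⟨w, hw⟩ := hSne
    have hsub : ({w} : Set M)ᶜ ⊆ Sᶜ := by
      intro x hx hxS
      exact hx (h x hxS w hw)
    have hw0 : μ ({w} : Set M)ᶜ = 0 := measure_mono_null hsub hSc
    apply hsupp w
    apply Measure.ext
    intro A hA
    rw [Measure.dirac_apply' w hA]
    by_cases hwA : w ∈ A
    · rw [Set.indicator_of_mem hwA]
      have hAc : μ Aᶜ = 0 := by
        refine measure_mono_null ?_ hw0
        intro x hx
        simp only [Set.mem_compl_iff, Set.mem_singleton_iff] at *
        intro hxw
        exact hx (hxw ▸ hwA)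
      have hle : (1:ℝ≥0∞) ≤ μ A := by
        calc (1:ℝ≥0∞) = μ Set.univ := measure_univ.symm
          _ ≤ μ A + μ Aᶜ := by
              rw [← Set.union_compl_self A]
              exact measure_union_le _ _
          _ = μ A := by rw [hAc, add_zero]
      exact le_antisymm prob_le_one hle
    · rw [Set.indicator_of_notMem hwA]
      refine measure_mono_null ?_ hw0
      intro x hx
      simp only [Set.mem_compl_iff, Set.mem_singleton_iff]
      intro hxw
      exact hwA (hxw ▸ hx)
  obtain ⟨u, hu, v, hv, huv⟩ := h2
  exact ⟨u, v, huv, hu, hv⟩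

/-- If `f` preserves a probability measure `μ` on a compact metric space, is
exponentially mixing for (Lipschitz-)smooth observables, and `μ` is not supported
on a single point, then there are `c, η̂ > 0` such that for every set `B` of
measure at least `1 - c` and every `n`, some ball of radius `e^{-η̂ n}` centered
in `B` has image of diameter at least `c` under `fⁿ`. -/
theorem expmixing_macroscopic_images {M : Type*} [MetricSpace M] [CompactSpace M]
    [MeasurableSpace M] [BorelSpace M]
    (μ : Measure M) [IsProbabilityMeasure μ]
    (f : M → M) (hf : Continuous f) (hpres : MeasurePreserving f μ μ)
    (hsupp : ∀ z : M, μ ≠ Measure.dirac z)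
    (C η : ℝ) (hC : 0 < C) (hη : 0 < η)
    (hmix : ∀ (φ ψ : M → ℝ) (a b : ℝ≥0), LipschitzWith a φ → LipschitzWith b ψ →
      (∀ x, |φ x| ≤ a) → (∀ x, |ψ x| ≤ b) → ∀ n : ℕ,
      |(∫ x, φ x * ψ (f^[n] x) ∂μ) - (∫ x, φ x ∂μ) * ∫ x, ψ x ∂μ|
        ≤ C * Real.exp (-η * n) * a * b) :
    ∃ c > (0:ℝ), ∃ ηhat > (0:ℝ), ∀ B : Set M, MeasurableSet B →
      1 - c ≤ (μ B).toReal → ∀ n : ℕ, ∃ z ∈ B,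
        c ≤ Metric.diam (f^[n] '' Metric.ball z (Real.exp (-ηhat * n))) := by
  obtain ⟨u, v, huv, hu, hv⟩ := exists_two_support_points μ hsupp
  set Δ : ℝ := dist u v with hΔdef
  have hΔ0 : 0 < Δ := dist_pos.mpr huv
  set R : ℝ := Δ/8 with hRdef
  have hR : 0 < R := by positivity
  set δ : ℝ := min ((μ (ball u (R/2))).toReal / 2) ((μ (ball v (R/2))).toReal / 2) with hδdef
  have hδ0 : 0 < δ := by
    apply lt_min
    · have h1 := hu (R/2) (by positivity)
      have h2 := ENNReal.toReal_pos h1.ne' (measure_ne_top μ _)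
      linarith
    · have h1 := hv (R/2) (by positivity)
      have h2 := ENNReal.toReal_pos h1.ne' (measure_ne_top μ _)
      linarith
  set bb : ℝ := max (1/R) 1 with hbbdef
  have hbb0 : (0:ℝ) < bb := lt_max_of_lt_right one_pos
  set q : ℝ := Real.exp (-(η/2)) with hqdef
  have hq0 : 0 < q := Real.exp_pos _
  have hq1 : q < 1 := by
    rw [hqdef, Real.exp_lt_one_iff]
    linarith
  have hq_eq : ∀ m : ℕ, q ^ m = Real.exp (-(η/2) * m) := by
    intro m
    rw [hqdef, ← Real.exp_nat_mul, mul_comm]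
  -- choose N₀
  have htend : Filter.Tendsto (fun N : ℕ => (4*C*bb/δ) * q^N) Filter.atTop (nhds 0) := by
    have h1 := tendsto_pow_atTop_nhds_zero_of_lt_one hq0.le hq1
    simpa using h1.const_mul (4*C*bb/δ)
  obtain ⟨N₀, hN₀⟩ := (htend.eventually_lt_const (by norm_num : (0:ℝ) < 1/2)).exists
  -- uniform continuity modulus
  have hUC : ∀ t : ℝ, ∃ d : ℝ, 0 < t → 0 < d ∧ ∀ x y : M, dist x y < d → dist (f x) (f y) < t := by
    intro t
    by_cases ht : 0 < t
    · obtain ⟨d, hd0, hd⟩ := Metric.uniformContinuous_iff.mp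
        (CompactSpace.uniformContinuous_of_continuous hf) t ht
      exact ⟨d, fun _ => ⟨hd0, fun x y h => hd h⟩⟩
    · exact ⟨1, fun h => absurd h ht⟩
  choose D hD using hUC
  -- chain of scales for finitely many iterates
  set eps : ℕ → ℝ := fun k => Nat.rec (3*Δ/4) (fun _ ih => min (D ih) ih) k with hepsdef
  have heps0 : eps 0 = 3*Δ/4 := rfl
  have hepsS : ∀ k, eps (k+1) = min (D (eps k)) (eps k) := fun k => rfl
  have hepsP : ∀ k, 0 < eps k ∧
      ∀ x y : M, dist x y < eps k → dist (f^[k] x) (f^[k] y) < 3*Δ/4 := by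
    intro k
    induction k with
    | zero =>
        refine ⟨by rw [heps0]; positivity, fun x y h => ?_⟩
        simpa [heps0] using h
    | succ k ih =>
        obtain ⟨ihpos, ihprop⟩ := ih
        obtain ⟨hD0, hDprop⟩ := hD (eps k) ihpos
        refine ⟨by rw [hepsS]; exact lt_min hD0 ihpos, fun x y h => ?_⟩
        rw [hepsS] at h
        have h1 : dist (f x) (f y) < eps k := hDprop x y (h.trans_le (min_le_left _ _))
        have h2 := ihprop (f x) (f y) h1
        simpa [Function.iterate_succ_apply] using h2
  have hepsmono : ∀ k l : ℕ, k ≤ l → eps l ≤ eps k := by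
    intro k l h
    induction l, h using Nat.le_induction with
    | base => exact le_rfl
    | succ l hl ih =>
        refine le_trans ?_ ih
        rw [hepsS]
        exact min_le_right _ _
  set c : ℝ := min (1/2) (eps N₀) with hcdef
  have hc0 : 0 < c := lt_min (by norm_num) (hepsP N₀).1
  have hchalf : c ≤ 1/2 := min_le_left _ _
  have hceps : c ≤ eps N₀ := min_le_right _ _
  refine ⟨c, hc0, η/2, by positivity, ?_⟩
  intro B hB hμB n
  -- the key claim coming from mixing
  have hkey : ∀ m : ℕ, N₀ ≤ m →
      ∃ z ∈ B, ∃ x y : M, dist x z < q^m ∧ dist y z < q^m ∧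
        dist (f^[m] x) u < R ∧ dist (f^[m] y) v < R := by
    intro m hm
    by_contra hcon
    push_neg at hcon
    set T₁ : Set M := B ∩ {z | ∀ x, dist x z < q^m → R ≤ dist (f^[m] x) u} with hT₁def
    set T₂ : Set M := B ∩ {z | ∀ x, dist x z < q^m → R ≤ dist (f^[m] x) v} with hT₂def
    have hmeas : ∀ w : M, MeasurableSet {z : M | ∀ x, dist x z < q^m → R ≤ dist (f^[m] x) w} := by
      intro w
      have heq : {z : M | ∀ x, dist x z < q^m → R ≤ dist (f^[m] x) w}
          = {z : M | ∃ x, dist x z < q^m ∧ dist (f^[m] x) w < R}ᶜ := by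
        ext z
        simp only [Set.mem_setOf_eq, Set.mem_compl_iff, not_exists, not_and, not_lt]
      rw [heq]
      refine (MeasurableSet.compl (IsOpen.measurableSet ?_))
      rw [Metric.isOpen_iff]
      rintro z ⟨x, hx1, hx2⟩
      refine ⟨q^m - dist x z, by linarith, fun z' hz' => ?_⟩
      have hzz' : dist z' z < q^m - dist x z := mem_ball.mp hz'
      refine ⟨x, ?_, hx2⟩
      calc dist x z' ≤ dist x z + dist z z' := dist_triangle _ _ _
        _ = dist x z + dist z' z := by rw [dist_comm z z']
        _ < q^m := by linarith
    have hsub : B ⊆ T₁ ∪ T₂ := by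
      intro z hz
      by_cases h1 : z ∈ T₁
      · exact Or.inl h1
      · right
        rw [hT₁def] at h1
        simp only [Set.mem_inter_iff, Set.mem_setOf_eq, hz, true_and, not_forall, not_le] at h1
        obtain ⟨x₀, hx₀1, hx₀2⟩ := h1
        exact ⟨hz, fun y hy => hcon z hz x₀ y hx₀1 hy hx₀2⟩
    have hrm0 : (0:ℝ) < q^m := pow_pos hq0 m
    have hrm1 : q^m ≤ 1 := pow_le_one₀ hq0.le hq1.le
    have hEeq : C * Real.exp (-η * m) * (2 / q^m) * bb = 2*C*bb*q^m := by
      have h2q : 2 / q^m = 2 * Real.exp ((η/2) * m) := by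
        rw [hq_eq, div_eq_mul_inv, ← Real.exp_neg]
        ring_nf
      rw [h2q]
      have hexp : Real.exp (-η * m) * Real.exp ((η/2) * m) = q^m := by
        rw [← Real.exp_add, hq_eq]
        congr 1
        ring
      calc C * Real.exp (-η * m) * (2 * Real.exp ((η/2) * m)) * bb
          = 2*C*bb*(Real.exp (-η * m) * Real.exp ((η/2) * m)) := by ring
        _ = 2*C*bb*q^m := by rw [hexp]
    have hone : ∀ (w : M) (T : Set M), MeasurableSet T →
        δ ≤ (μ (ball w (R/2))).toReal / 2 →
        (∀ z ∈ T, ∀ x, dist x z < q^m → R ≤ dist (f^[m] x) w) →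
        (μ T).toReal ≤ 2*C*bb/δ * q^m := by
      intro w T hTm hδw hav
      have h := core_bound μ f C η hC hmix w R hR T hTm m (q^m) hrm0 hrm1 hav
      have h2 : (μ T).toReal * δ ≤ 2*C*bb*q^m := by
        calc (μ T).toReal * δ ≤ (μ T).toReal * ((μ (ball w (R/2))).toReal / 2) :=
              mul_le_mul_of_nonneg_left hδw ENNReal.toReal_nonneg
          _ ≤ C * Real.exp (-η * m) * (2 / q^m) * bb := h
          _ = 2*C*bb*q^m := hEeq
      rw [show 2*C*bb/δ * q^m = 2*C*bb*q^m/δ by ring, le_div_iff₀ hδ0]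
      exact h2
    have hb1 : (μ T₁).toReal ≤ 2*C*bb/δ * q^m :=
      hone u T₁ (hB.inter (hmeas u)) (min_le_left _ _) (fun z hz => hz.2)
    have hb2 : (μ T₂).toReal ≤ 2*C*bb/δ * q^m :=
      hone v T₂ (hB.inter (hmeas v)) (min_le_right _ _) (fun z hz => hz.2)
    have hBle : (μ B).toReal ≤ (μ T₁).toReal + (μ T₂).toReal := by
      have h1 : μ B ≤ μ T₁ + μ T₂ := le_trans (measure_mono hsub) (measure_union_le _ _)
      calc (μ B).toReal ≤ (μ T₁ + μ T₂).toReal :=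
            ENNReal.toReal_mono (ENNReal.add_ne_top.2 ⟨measure_ne_top μ _, measure_ne_top μ _⟩) h1
        _ ≤ (μ T₁).toReal + (μ T₂).toReal := ENNReal.toReal_add_le
    have hqm : q^m ≤ q^N₀ := pow_le_pow_of_le_one hq0.le hq1.le hm
    have hfinal : (4*C*bb/δ) * q^N₀ < 1/2 := hN₀
    have hpos4 : (0:ℝ) < 4*C*bb/δ := by positivity
    have hhalf : (1:ℝ)/2 ≤ (μ B).toReal := by linarith
    have hcontra : (1:ℝ)/2 ≤ 4*C*bb/δ*q^N₀ := by
      calc (1:ℝ)/2 ≤ (μ B).toReal := hhalf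
        _ ≤ (μ T₁).toReal + (μ T₂).toReal := hBle
        _ ≤ 2*C*bb/δ*q^m + 2*C*bb/δ*q^m := add_le_add hb1 hb2
        _ = 4*C*bb/δ*q^m := by ring
        _ ≤ 4*C*bb/δ*q^N₀ := mul_le_mul_of_nonneg_left hqm hpos4.le
    linarith
  -- now conclude
  have hbound : ∀ (m : ℕ), N₀ ≤ m → ∀ z : M, z ∈ B →
      (∃ x y : M, dist x z < q^m ∧ dist y z < q^m ∧
        dist (f^[m] x) u < R ∧ dist (f^[m] y) v < R) → True := fun _ _ _ _ _ => trivial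
  rcases le_or_gt N₀ n with hn | hn
  · obtain ⟨z, hzB, x, y, hx, hy, hxu, hyv⟩ := hkey n hn
    refine ⟨z, hzB, ?_⟩
    have hdist : 3*Δ/4 ≤ dist (f^[n] x) (f^[n] y) := by
      have ht : dist u v ≤ dist u (f^[n] x) + dist (f^[n] x) (f^[n] y) + dist (f^[n] y) v :=
        dist_triangle4 _ _ _ _
      have h1 : dist u (f^[n] x) < R := by rw [dist_comm]; exact hxu
      rw [← hΔdef] at ht
      rw [hRdef] at h1 hyv
      linarith
    have hx' : x ∈ ball z (Real.exp (-(η/2) * n)) := by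
      rw [mem_ball, ← hq_eq]; exact hx
    have hy' : y ∈ ball z (Real.exp (-(η/2) * n)) := by
      rw [mem_ball, ← hq_eq]; exact hy
    calc c ≤ eps N₀ := hceps
      _ ≤ eps 0 := hepsmono 0 N₀ (Nat.zero_le _)
      _ = 3*Δ/4 := heps0
      _ ≤ dist (f^[n] x) (f^[n] y) := hdist
      _ ≤ Metric.diam (f^[n] '' Metric.ball z (Real.exp (-(η/2) * n))) :=
          dist_le_diam_of_mem isBounded_of_compactSpace
            (Set.mem_image_of_mem _ hx') (Set.mem_image_of_mem _ hy')
  · obtain ⟨z, hzB, x, y, hx, hy, hxu, hyv⟩ := hkey N₀ le_rfl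
    refine ⟨z, hzB, ?_⟩
    have hdist : 3*Δ/4 ≤ dist (f^[N₀] x) (f^[N₀] y) := by
      have ht : dist u v ≤ dist u (f^[N₀] x) + dist (f^[N₀] x) (f^[N₀] y) + dist (f^[N₀] y) v :=
        dist_triangle4 _ _ _ _
      have h1 : dist u (f^[N₀] x) < R := by rw [dist_comm]; exact hxu
      rw [← hΔdef] at ht
      rw [hRdef] at h1 hyv
      linarith
    have hd2 : eps (N₀ - n) ≤ dist (f^[n] x) (f^[n] y) := by
      by_contra h'
      push_neg at h'
      have h3 := (hepsP (N₀ - n)).2 _ _ h'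
      rw [← Function.iterate_add_apply, ← Function.iterate_add_apply,
        Nat.sub_add_cancel hn.le] at h3
      linarith
    have hqmono : q^N₀ ≤ q^n := pow_le_pow_of_le_one hq0.le hq1.le hn.le
    have hx' : x ∈ ball z (Real.exp (-(η/2) * n)) := by
      rw [mem_ball, ← hq_eq]
      linarith
    have hy' : y ∈ ball z (Real.exp (-(η/2) * n)) := by
      rw [mem_ball, ← hq_eq]
      linarith
    calc c ≤ eps N₀ := hceps
      _ ≤ eps (N₀ - n) := hepsmono _ _ (Nat.sub_le _ _)
      _ ≤ dist (f^[n] x) (f^[n] y) := hd2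
      _ ≤ Metric.diam (f^[n] '' Metric.ball z (Real.exp (-(η/2) * n))) :=
          dist_le_diam_of_mem isBounded_of_compactSpace
            (Set.mem_image_of_mem _ hx') (Set.mem_image_of_mem _ hy')
end

section
/- Let φ : GL(ℝ^D) × Grass^u(ℝ^D) → ℝ be φ(A, E) = log|det(A|_E)|, the logarithm of the absolute Jacobian of A restricted to the u-dimensional subspace E (with respect to Euclidean inner products). Fix C₀ > 0. There is a constant N(C₀) such that if ‖A‖, ‖B‖, ‖A^{-1}‖, ‖B^{-1}‖ ≤ C₀ and E, F are graphs of linear maps L_E, L_F : ℝ^a → ℝ^b (where ℝ^D = ℝ^a × ℝ^b and a = u), then |φ(A, E) − φ(B, F)| ≤ N(C₀)(‖A − B‖ + ‖L_E − L_F‖). -/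
open scoped RealInnerProductSpace

noncomputable section

/-- `ℝ^D = ℝ^a × ℝ^b` with the Euclidean (ℓ²) inner product. -/
abbrev EucProd (a b : ℕ) :=
  WithLp 2 (EuclideanSpace ℝ (Fin a) × EuclideanSpace ℝ (Fin b))

/-- The natural basis `(e_i, L e_i)` of the graph of `L : ℝ^a → ℝ^b`. -/
def graphBasis {a b : ℕ}
    (L : EuclideanSpace ℝ (Fin a) →L[ℝ] EuclideanSpace ℝ (Fin b)) (i : Fin a) :
    EucProd a b :=
  (WithLp.equiv 2 (EuclideanSpace ℝ (Fin a) × EuclideanSpace ℝ (Fin b))).symm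
    (EuclideanSpace.single i 1, L (EuclideanSpace.single i 1))

/-- Gram matrix of a family of vectors. -/
def gramMat {a b : ℕ} (v : Fin a → EucProd a b) : Matrix (Fin a) (Fin a) ℝ :=
  Matrix.of fun i j => (inner ℝ (v i) (v j) : ℝ)

/-- `φ(A, E) = log |det (A|_E)|`, where `E` is the graph of `L` and the determinant
of `A : E → A(E)` is computed with respect to Euclidean structures, via the Gram
matrix formula `|det(A|_E)|² = det Gram(A g_i) / det Gram(g_i)` for the graph
parametrization `g_i = (e_i, L e_i)` of `E`. -/
def logJac {a b : ℕ} (A : EucProd a b →L[ℝ] EucProd a b)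
    (L : EuclideanSpace ℝ (Fin a) →L[ℝ] EuclideanSpace ℝ (Fin b)) : ℝ :=
  (1 / 2) * Real.log
    ((gramMat fun i => A (graphBasis L i)).det / (gramMat (graphBasis L)).det)

namespace Scratch
variable {n : ℕ}

lemma det_le_one_of_psd_le_one {Z : Matrix (Fin n) (Fin n) ℝ}
    (hZ : Z.PosSemidef) (h1 : (1 - Z).PosSemidef) : Z.det ≤ 1 := by
  rw [hZ.1.det_eq_prod_eigenvalues]
  refine Finset.prod_le_one (fun i _ => by exact_mod_cast hZ.eigenvalues_nonneg i)
    (fun i _ => ?_)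
  have hq := h1.dotProduct_mulVec_nonneg ⇑(hZ.1.eigenvectorBasis i)
  have hvv : dotProduct ⇑(hZ.1.eigenvectorBasis i) ⇑(hZ.1.eigenvectorBasis i) = 1 := by
    have hnorm := hZ.1.eigenvectorBasis.orthonormal.1 i
    have h2 : (‖hZ.1.eigenvectorBasis i‖ : ℝ) ^ 2 = 1 := by rw [hnorm]; norm_num
    rw [← real_inner_self_eq_norm_sq] at h2
    rw [← h2, PiLp.inner_apply]
    simp only [dotProduct, RCLike.inner_apply, conj_trivial]
  have heig := hZ.1.eigenvalues_eq i
  rw [Matrix.sub_mulVec, dotProduct_sub, Matrix.one_mulVec] at hq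
  simp only [star_trivial, RCLike.re_to_real] at hq heig
  have : hZ.1.eigenvalues i ≤ 1 := by rw [heig]; linarith
  exact_mod_cast this

end Scratch

namespace S2
open Matrix
open scoped MatrixOrder

open Matrix
variable {n : ℕ}

lemma det_le_det_of_loewner {X Y : Matrix (Fin n) (Fin n) ℝ}
    (hX : X.PosSemidef) (hYX : (Y - X).PosSemidef) : X.det ≤ Y.det := by
  have hY : Y.PosSemidef := by
    have := hX.add hYX
    simpa using this
  by_cases hdet : Y.det = 0
  · -- show X.det = 0
    obtain ⟨v, hv0, hYv⟩ := (Matrix.exists_mulVec_eq_zero_iff).2 hdet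
    have h1 : dotProduct v (Y *ᵥ v) = 0 := by rw [hYv, dotProduct_zero]
    have h2 := hYX.dotProduct_mulVec_nonneg v
    have h3 := hX.dotProduct_mulVec_nonneg v
    simp only [star_trivial, Matrix.sub_mulVec, dotProduct_sub, h1] at h2 h3
    have h4 : dotProduct v (X *ᵥ v) = 0 := le_antisymm (by linarith) h3
    have h5 : X *ᵥ v = 0 := by
      have := hX.dotProduct_mulVec_zero_iff v
      simp only [star_trivial] at this
      exact this.1 h4
    have : X.det = 0 := (Matrix.exists_mulVec_eq_zero_iff).1 ⟨v, hv0, h5⟩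
    rw [this, hdet]
  · -- Y invertible
    set S := CFC.sqrt Y with hS
    have hSps : S.PosSemidef := (CFC.sqrt_nonneg Y).posSemidef
    have hSS : S * S = Y := CFC.sqrt_mul_sqrt_self Y hY.nonneg
    have hdetS : S.det ≠ 0 := by
      intro h
      apply hdet
      rw [← hSS, Matrix.det_mul, h, mul_zero]
    have hSunit : IsUnit S.det := isUnit_iff_ne_zero.2 hdetS
    have hSinv_herm : (S⁻¹).IsHermitian := hSps.1.inv
    set Z := S⁻¹ * X * S⁻¹ with hZ
    have hZps : Z.PosSemidef := by
      have := hX.conjTranspose_mul_mul_same (S⁻¹)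
      rwa [show (S⁻¹)ᴴ = S⁻¹ from hSinv_herm] at this
    have hSYS : S⁻¹ * Y * S⁻¹ = 1 := by
      rw [← hSS, ← Matrix.mul_assoc, Matrix.nonsing_inv_mul _ hSunit, Matrix.one_mul,
        Matrix.mul_nonsing_inv _ hSunit]
    have h1Z : ((1 : Matrix (Fin n) (Fin n) ℝ) - Z).PosSemidef := by
      have h := hYX.conjTranspose_mul_mul_same (S⁻¹)
      rw [show (S⁻¹)ᴴ = S⁻¹ from hSinv_herm] at h
      have e : S⁻¹ * (Y - X) * S⁻¹ = 1 - Z := by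
        rw [Matrix.mul_sub, Matrix.sub_mul, hSYS]
      rwa [e] at h
    have hdZ : Z.det ≤ 1 := Scratch.det_le_one_of_psd_le_one hZps h1Z
    have hdetZ : Z.det = X.det / Y.det := by
      have : Z.det = S⁻¹.det * X.det * S⁻¹.det := by rw [hZ, Matrix.det_mul, Matrix.det_mul]
      rw [this, Matrix.det_nonsing_inv, ← hSS, Matrix.det_mul, Ring.inverse_eq_inv]
      field_simp
    have hYdet : Y.det = S.det ^ 2 := by rw [← hSS, Matrix.det_mul, sq]
    have hYpos : 0 < Y.det := by
      rw [hYdet]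
      positivity
    rw [hdetZ, div_le_one hYpos] at hdZ
    exact hdZ

end S2

namespace Gram
open Matrix
variable {a b : ℕ}

lemma isHermitian (v : Fin a → EucProd a b) : (gramMat v).IsHermitian := by
  ext i j
  simp only [gramMat, Matrix.conjTranspose_apply, Matrix.of_apply, star_trivial]
  exact real_inner_comm _ _

lemma quad (v : Fin a → EucProd a b) (x : Fin a → ℝ) :
    dotProduct x ((gramMat v).mulVec x) = ⟪∑ i, x i • v i, ∑ i, x i • v i⟫ := by
  simp only [dotProduct, Matrix.mulVec, gramMat, Matrix.of_apply,
    sum_inner, inner_sum, real_inner_smul_left, real_inner_smul_right, dotProduct,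
    Finset.mul_sum]
  rw [Finset.sum_comm]
  congr 1; ext i; congr 1; ext j; ring

lemma posSemidef (v : Fin a → EucProd a b) : (gramMat v).PosSemidef := by
  refine Matrix.PosSemidef.of_dotProduct_mulVec_nonneg (isHermitian v) fun x => ?_
  rw [star_trivial, quad]
  exact real_inner_self_nonneg

lemma smul_sub_comp_posSemidef (T : EucProd a b →L[ℝ] EucProd a b) (v : Fin a → EucProd a b) :
    ((‖T‖ ^ 2 • gramMat v) - gramMat (fun i => T (v i))).PosSemidef := by
  refine Matrix.PosSemidef.of_dotProduct_mulVec_nonneg ?_ ?_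
  · ext i j
    simp only [Matrix.conjTranspose_apply, Matrix.sub_apply, Matrix.smul_apply, gramMat,
      Matrix.of_apply, star_trivial, smul_eq_mul]
    rw [real_inner_comm ((fun i => T (v i)) i), real_inner_comm (v i)]
  · intro x
    rw [star_trivial, Matrix.sub_mulVec, dotProduct_sub, Matrix.smul_mulVec,
      dotProduct_smul, quad, quad, sub_nonneg]
    have h1 : ∑ i, x i • T (v i) = T (∑ i, x i • v i) := by
      rw [map_sum]
      simp only [_root_.map_smul]
    rw [real_inner_self_eq_norm_sq, real_inner_self_eq_norm_sq, h1, smul_eq_mul]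
    have hT := T.le_opNorm (∑ i, x i • v i)
    calc ‖T (∑ i, x i • v i)‖ ^ 2 ≤ (‖T‖ * ‖∑ i, x i • v i‖) ^ 2 :=
          pow_le_pow_left₀ (norm_nonneg _) hT 2
      _ = ‖T‖ ^ 2 * ‖∑ i, x i • v i‖ ^ 2 := by ring

lemma det_comp_le (T : EucProd a b →L[ℝ] EucProd a b) (v : Fin a → EucProd a b) :
    (gramMat fun i => T (v i)).det ≤ ‖T‖ ^ (2 * a) * (gramMat v).det := by
  have h := S2.det_le_det_of_loewner (posSemidef fun i => T (v i)) (smul_sub_comp_posSemidef T v)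
  calc (gramMat fun i => T (v i)).det ≤ (‖T‖ ^ 2 • gramMat v).det := h
    _ = (‖T‖ ^ 2) ^ a * (gramMat v).det := by
        rw [Matrix.det_smul, Fintype.card_fin]
    _ = ‖T‖ ^ (2 * a) * (gramMat v).det := by rw [← pow_mul]

lemma gram_orthonormal {w : Fin a → EucProd a b} (hw : Orthonormal ℝ w) :
    gramMat w = 1 := by
  rw [orthonormal_iff_ite] at hw
  ext i j
  simp only [gramMat, Matrix.of_apply, Matrix.one_apply]
  exact hw i j

lemma change_basis (R : Matrix (Fin a) (Fin a) ℝ) (p q : Fin a → EucProd a b)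
    (h : ∀ j, p j = ∑ i, R i j • q i) :
    gramMat p = Rᵀ * gramMat q * R := by
  ext j l
  simp only [gramMat, Matrix.of_apply, h, Matrix.mul_apply, Matrix.transpose_apply,
    sum_inner, inner_sum, real_inner_smul_left, real_inner_smul_right, Finset.sum_mul,
    Finset.mul_sum]
  congr 1; ext i; congr 1; ext k
  rw [real_inner_comm]
  ring

end Gram

namespace Aux

lemma abs_prod_sub_prod_le {ι : Type*} (s : Finset ι) (f g : ι → ℝ) {K ε : ℝ}
    (hK : 0 ≤ K) (hε : 0 ≤ ε)
    (hf : ∀ i ∈ s, |f i| ≤ K) (hg : ∀ i ∈ s, |g i| ≤ K)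
    (hd : ∀ i ∈ s, |f i - g i| ≤ ε) :
    |∏ i ∈ s, f i - ∏ i ∈ s, g i| ≤ s.card * K ^ (s.card - 1) * ε := by
  classical
  induction s using Finset.cons_induction with
  | empty => simp
  | cons a s ha ih =>
    have hfs : ∀ i ∈ s, |f i| ≤ K := fun i hi => hf i (Finset.mem_cons_of_mem hi)
    have hgs : ∀ i ∈ s, |g i| ≤ K := fun i hi => hg i (Finset.mem_cons_of_mem hi)
    have hds : ∀ i ∈ s, |f i - g i| ≤ ε := fun i hi => hd i (Finset.mem_cons_of_mem hi)
    have IH := ih hfs hgs hds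
    rw [Finset.prod_cons, Finset.prod_cons, Finset.card_cons]
    have hprodf : |∏ i ∈ s, f i| ≤ K ^ s.card := by
      rw [Finset.abs_prod]
      calc ∏ i ∈ s, |f i| ≤ ∏ _i ∈ s, K := Finset.prod_le_prod
            (fun i _ => abs_nonneg _) hfs
        _ = K ^ s.card := by rw [Finset.prod_const]
    have key : |f a * ∏ i ∈ s, f i - g a * ∏ i ∈ s, g i| ≤
        |f a - g a| * |∏ i ∈ s, f i| + |g a| * |∏ i ∈ s, f i - ∏ i ∈ s, g i| := by
      have : f a * ∏ i ∈ s, f i - g a * ∏ i ∈ s, g i =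
          (f a - g a) * ∏ i ∈ s, f i + g a * (∏ i ∈ s, f i - ∏ i ∈ s, g i) := by ring
      rw [this]
      calc _ ≤ |(f a - g a) * ∏ i ∈ s, f i| + |g a * (∏ i ∈ s, f i - ∏ i ∈ s, g i)| :=
            abs_add_le _ _
        _ = _ := by rw [abs_mul, abs_mul]
    have h1 : |f a - g a| * |∏ i ∈ s, f i| ≤ ε * K ^ s.card :=
      mul_le_mul (hd a (Finset.mem_cons_self a s)) hprodf (abs_nonneg _) hε
    have h2 : |g a| * |∏ i ∈ s, f i - ∏ i ∈ s, g i| ≤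
        K * (s.card * K ^ (s.card - 1) * ε) :=
      mul_le_mul (hg a (Finset.mem_cons_self a s)) IH (abs_nonneg _) hK
    have h3 : K * (s.card * K ^ (s.card - 1) * ε) ≤ s.card * K ^ s.card * ε := by
      rcases Nat.eq_zero_or_pos s.card with h | h
      · simp [h]
      · have : K * K ^ (s.card - 1) = K ^ s.card := by
          rw [← pow_succ']
          congr 1
          omega
        rw [show K * ((s.card : ℝ) * K ^ (s.card - 1) * ε) =
          (s.card : ℝ) * (K * K ^ (s.card - 1)) * ε by ring, this]
    calc |f a * ∏ i ∈ s, f i - g a * ∏ i ∈ s, g i|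
        ≤ ε * K ^ s.card + s.card * K ^ s.card * ε := by linarith
      _ ≤ ((s.card + 1 : ℕ) : ℝ) * K ^ (s.card + 1 - 1) * ε := by
          simp only [Nat.add_sub_cancel]
          push_cast
          nlinarith [pow_nonneg hK s.card, hε]

lemma abs_det_sub_det_le {n : ℕ} (X Y : Matrix (Fin n) (Fin n) ℝ) {K ε : ℝ}
    (hK : 0 ≤ K) (hε : 0 ≤ ε)
    (hX : ∀ i j, |X i j| ≤ K) (hY : ∀ i j, |Y i j| ≤ K)
    (hd : ∀ i j, |X i j - Y i j| ≤ ε) :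
    |X.det - Y.det| ≤ (n.factorial : ℝ) * n * K ^ (n - 1) * ε := by
  rw [Matrix.det_apply, Matrix.det_apply]
  rw [← Finset.sum_sub_distrib]
  calc |∑ σ : Equiv.Perm (Fin n), (Equiv.Perm.sign σ • ∏ i, X (σ i) i -
          Equiv.Perm.sign σ • ∏ i, Y (σ i) i)|
      ≤ ∑ σ : Equiv.Perm (Fin n), |Equiv.Perm.sign σ • ∏ i, X (σ i) i -
          Equiv.Perm.sign σ • ∏ i, Y (σ i) i| := Finset.abs_sum_le_sum_abs _ _
    _ ≤ ∑ _σ : Equiv.Perm (Fin n), n * K ^ (n - 1) * ε := by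
        apply Finset.sum_le_sum
        intro σ _
        rw [← smul_sub]
        rw [show (Equiv.Perm.sign σ • (∏ i, X (σ i) i - ∏ i, Y (σ i) i)) =
          ((Equiv.Perm.sign σ : ℤ) : ℝ) * (∏ i, X (σ i) i - ∏ i, Y (σ i) i) by
            simp [Units.smul_def, zsmul_eq_mul]]
        rw [abs_mul]
        have hsign : |((Equiv.Perm.sign σ : ℤ) : ℝ)| = 1 := by
          rcases Int.units_eq_one_or (Equiv.Perm.sign σ) with h | h <;> simp [h]
        rw [hsign, one_mul]
        have := abs_prod_sub_prod_le Finset.univ (fun i => X (σ i) i) (fun i => Y (σ i) i)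
          hK hε (fun i _ => hX _ _) (fun i _ => hY _ _) (fun i _ => hd _ _)
        simpa using this
    _ = (n.factorial : ℝ) * n * K ^ (n - 1) * ε := by
        rw [Finset.sum_const, Finset.card_univ, Fintype.card_perm, Fintype.card_fin,
          nsmul_eq_mul]
        ring

lemma abs_log_sub_log_le {c x y : ℝ} (hc : 0 < c) (hx : c ≤ x) (hy : c ≤ y) :
    |Real.log x - Real.log y| ≤ |x - y| / c := by
  have key : ∀ u v : ℝ, c ≤ u → c ≤ v → u ≤ v → Real.log v - Real.log u ≤ (v - u) / c := by
    intro u v hu hv huv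
    have hu0 : 0 < u := lt_of_lt_of_le hc hu
    have hv0 : 0 < v := lt_of_lt_of_le hc hv
    have h1 : Real.log v - Real.log u = Real.log (v / u) := (Real.log_div hv0.ne' hu0.ne').symm
    rw [h1]
    have h2 : Real.log (v / u) ≤ v / u - 1 := Real.log_le_sub_one_of_pos (by positivity)
    have h3 : v / u - 1 = (v - u) / u := by field_simp
    have h4 : (v - u) / u ≤ (v - u) / c := by
      apply div_le_div_of_nonneg_left (by linarith) hc hu
    linarith
  rcases le_total x y with h | h
  · have h0 := key x y hx hy h
    have hlog : Real.log x ≤ Real.log y := Real.log_le_log (lt_of_lt_of_le hc hx) h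
    rw [abs_sub_comm, abs_of_nonneg (by linarith : (0:ℝ) ≤ Real.log y - Real.log x),
      abs_sub_comm x y, abs_of_nonneg (by linarith : (0:ℝ) ≤ y - x)]
    linarith
  · have h0 := key y x hy hx h
    have hlog : Real.log y ≤ Real.log x := Real.log_le_log (lt_of_lt_of_le hc hy) h
    rw [abs_of_nonneg (by linarith : (0:ℝ) ≤ Real.log x - Real.log y),
      abs_of_nonneg (by linarith : (0:ℝ) ≤ x - y)]
    linarith

lemma abs_log_le {d R : ℝ} {k : ℕ} (hR : 1 ≤ R) (h1 : 1 ≤ R ^ k * d) (h2 : d ≤ R ^ k) :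
    |Real.log d| ≤ k * Real.log R := by
  have hRk : (0:ℝ) < R ^ k := by positivity
  have hd : 0 < d := by nlinarith
  rw [abs_le]
  constructor
  · have hinv : (R ^ k)⁻¹ ≤ d := by
      rw [inv_le_iff_one_le_mul₀ hRk]
      linarith [h1]
    have := Real.log_le_log (by positivity) hinv
    rw [Real.log_inv, Real.log_pow] at this
    push_cast at this
    linarith
  · have := Real.log_le_log hd h2
    rw [Real.log_pow] at this
    push_cast at this
    linarith

end Aux

namespace Aux2
variable {a b : ℕ}

lemma graphBasis_linearIndependent (L : EuclideanSpace ℝ (Fin a) →L[ℝ] EuclideanSpace ℝ (Fin b)) :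
    LinearIndependent ℝ (graphBasis L) := by
  let p : EucProd a b →ₗ[ℝ] EuclideanSpace ℝ (Fin a) :=
    (LinearMap.fst ℝ (EuclideanSpace ℝ (Fin a)) (EuclideanSpace ℝ (Fin b))).comp
      (WithLp.linearEquiv 2 ℝ (EuclideanSpace ℝ (Fin a) × EuclideanSpace ℝ (Fin b))).toLinearMap
  have hcomp : (fun i => p (graphBasis L i)) = fun i => EuclideanSpace.single i (1:ℝ) := by
    funext i
    simp [p, graphBasis]
  have hind : LinearIndependent ℝ (fun i => EuclideanSpace.single i (1:ℝ) :
      Fin a → EuclideanSpace ℝ (Fin a)) := by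
    have h := (EuclideanSpace.basisFun (Fin a) ℝ).toBasis.linearIndependent
    rw [show (fun i => EuclideanSpace.single i (1:ℝ) : Fin a → EuclideanSpace ℝ (Fin a))
      = ⇑(EuclideanSpace.basisFun (Fin a) ℝ) from
      funext fun i => (EuclideanSpace.basisFun_apply (Fin a) ℝ i).symm]
    simpa using h
  apply LinearIndependent.of_comp p
  rw [show (p ∘ graphBasis L) = fun i => p (graphBasis L i) from rfl, hcomp]
  exact hind

lemma exists_onb (v : Fin a → EucProd a b) (hv : LinearIndependent ℝ v) :
    ∃ (w : Fin a → EucProd a b) (R : Matrix (Fin a) (Fin a) ℝ),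
      Orthonormal ℝ w ∧ R.det ≠ 0 ∧ ∀ j, v j = ∑ i, R i j • w i := by
  rcases isEmpty_or_nonempty (Fin a) with hempty | hne
  · refine ⟨v, 1, ?_, by simp, fun j => (hempty.elim j)⟩
    rw [orthonormal_iff_ite]
    intro i
    exact (hempty.elim i)
  · set W := Submodule.span ℝ (Set.range v) with hW
    have hfd : FiniteDimensional ℝ W := FiniteDimensional.span_of_finite ℝ (Set.finite_range v)
    have hfr : Module.finrank ℝ W = a := by
      rw [hW, finrank_span_eq_card hv, Fintype.card_fin]
    let onb : OrthonormalBasis (Fin a) ℝ W :=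
      (stdOrthonormalBasis ℝ W).reindex (finCongr hfr)
    let w : Fin a → EucProd a b := fun i => ((onb i : W) : EucProd a b)
    have hw : Orthonormal ℝ w := by
      rw [orthonormal_iff_ite]
      intro i j
      have := onb.orthonormal
      rw [orthonormal_iff_ite] at this
      rw [← this i j]
      exact (Submodule.coe_inner W (onb i) (onb j)).symm
    let vW : Fin a → W := fun j => ⟨v j, Submodule.subset_span (Set.mem_range_self j)⟩
    have hvW : LinearIndependent ℝ vW := by
      apply LinearIndependent.of_comp W.subtype
      exact hv
    let bv : Module.Basis (Fin a) ℝ W :=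
      basisOfLinearIndependentOfCardEqFinrank hvW (by rw [Fintype.card_fin, hfr])
    have hbv : ⇑bv = vW := coe_basisOfLinearIndependentOfCardEqFinrank hvW _
    set R : Matrix (Fin a) (Fin a) ℝ := onb.toBasis.toMatrix vW with hR
    have hdet : R.det ≠ 0 := by
      have hflip : R * bv.toMatrix onb.toBasis = 1 := by
        rw [hR, ← hbv]
        exact Module.Basis.toMatrix_mul_toMatrix_flip _ _
      intro h0
      have := congrArg Matrix.det hflip
      rw [Matrix.det_mul, h0, zero_mul, Matrix.det_one] at this
      exact zero_ne_one this
    refine ⟨w, R, hw, hdet, fun j => ?_⟩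
    have hsum : ∑ i, R i j • onb.toBasis i = vW j := onb.toBasis.sum_toMatrix_smul_self vW j
    have := congrArg (W.subtype) hsum
    rw [map_sum] at this
    simpa [w, vW, Submodule.coe_smul] using this.symm

end Aux2

namespace Shear
variable {a b : ℕ}

def prode : EucProd a b ≃L[ℝ] (EuclideanSpace ℝ (Fin a) × EuclideanSpace ℝ (Fin b)) :=
  WithLp.prodContinuousLinearEquiv 2 ℝ (EuclideanSpace ℝ (Fin a)) (EuclideanSpace ℝ (Fin b))

def pi1 : EucProd a b →L[ℝ] EuclideanSpace ℝ (Fin a) :=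
  (ContinuousLinearMap.fst ℝ (EuclideanSpace ℝ (Fin a)) (EuclideanSpace ℝ (Fin b))).comp
    (prode.toContinuousLinearMap)

def iota2 : EuclideanSpace ℝ (Fin b) →L[ℝ] EucProd a b :=
  (prode.symm.toContinuousLinearMap).comp
    (ContinuousLinearMap.inr ℝ (EuclideanSpace ℝ (Fin a)) (EuclideanSpace ℝ (Fin b)))

lemma pi1_apply (z : EucProd a b) : pi1 z = z.fst := rfl

lemma iota2_fst (y : EuclideanSpace ℝ (Fin b)) : (iota2 (a := a) y).fst = 0 := rfl
lemma iota2_snd (y : EuclideanSpace ℝ (Fin b)) : (iota2 (a := a) y).snd = y := rfl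

lemma norm_pi1_le (z : EucProd a b) : ‖pi1 z‖ ≤ ‖z‖ := by
  rw [pi1_apply]
  have h := WithLp.prod_norm_sq_eq_of_L2 z
  have h2 : ‖z.fst‖ ^ 2 ≤ ‖z‖ ^ 2 := by
    rw [h]; nlinarith [sq_nonneg ‖z.snd‖]
  exact (pow_le_pow_iff_left₀ (norm_nonneg _) (norm_nonneg _) (by norm_num)).mp h2

lemma norm_iota2 (y : EuclideanSpace ℝ (Fin b)) : ‖iota2 (a := a) y‖ = ‖y‖ := by
  have h := WithLp.prod_norm_eq_of_L2 (iota2 (a := a) y)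
  rw [h, iota2_fst, iota2_snd]
  simp [Real.sqrt_sq_eq_abs]

lemma pi1_iota2 (y : EuclideanSpace ℝ (Fin b)) : pi1 (iota2 (a := a) y) = 0 := rfl

lemma pi1_graphBasis (L : EuclideanSpace ℝ (Fin a) →L[ℝ] EuclideanSpace ℝ (Fin b)) (i : Fin a) :
    pi1 (graphBasis L i) = EuclideanSpace.single i 1 := rfl

def shear (M : EuclideanSpace ℝ (Fin a) →L[ℝ] EuclideanSpace ℝ (Fin b)) :
    EucProd a b →L[ℝ] EucProd a b :=
  iota2.comp (M.comp pi1)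

lemma shear_apply (M : EuclideanSpace ℝ (Fin a) →L[ℝ] EuclideanSpace ℝ (Fin b))
    (z : EucProd a b) : shear M z = iota2 (M (pi1 z)) := rfl

lemma norm_shear_le (M : EuclideanSpace ℝ (Fin a) →L[ℝ] EuclideanSpace ℝ (Fin b)) :
    ‖shear M‖ ≤ ‖M‖ := by
  apply ContinuousLinearMap.opNorm_le_bound _ (norm_nonneg M)
  intro z
  rw [shear_apply, norm_iota2]
  calc ‖M (pi1 z)‖ ≤ ‖M‖ * ‖pi1 z‖ := M.le_opNorm _
    _ ≤ ‖M‖ * ‖z‖ := by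
        apply mul_le_mul_of_nonneg_left (norm_pi1_le z) (norm_nonneg M)

lemma shear_shear (M M' : EuclideanSpace ℝ (Fin a) →L[ℝ] EuclideanSpace ℝ (Fin b))
    (z : EucProd a b) : shear M (shear M' z) = 0 := by
  rw [shear_apply, shear_apply, pi1_iota2, map_zero, map_zero]

lemma graphBasis_shear (LE LF : EuclideanSpace ℝ (Fin a) →L[ℝ] EuclideanSpace ℝ (Fin b))
    (i : Fin a) :
    graphBasis LF i = graphBasis LE i + shear (LF - LE) (graphBasis LE i) := by
  have hfst : (graphBasis LE i + shear (LF - LE) (graphBasis LE i)).fst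
      = EuclideanSpace.single i 1 := by
    show (graphBasis LE i).fst + (shear (LF - LE) (graphBasis LE i)).fst
      = EuclideanSpace.single i 1
    rw [shear_apply, iota2_fst, add_zero]
    rfl
  have hsnd : (graphBasis LE i + shear (LF - LE) (graphBasis LE i)).snd
      = LF (EuclideanSpace.single i 1) := by
    show (graphBasis LE i).snd + (shear (LF - LE) (graphBasis LE i)).snd
      = LF (EuclideanSpace.single i 1)
    rw [shear_apply, iota2_snd, pi1_graphBasis]
    show LE (EuclideanSpace.single i 1) + (LF - LE) (EuclideanSpace.single i 1) = _
    rw [ContinuousLinearMap.sub_apply]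
    abel
  have key : ∀ u w : EucProd a b, u.fst = w.fst → u.snd = w.snd → u = w := by
    intro u w h1 h2
    exact WithLp.ofLp_injective 2 (Prod.ext h1 h2)
  refine (key _ _ ?_ ?_).symm
  · rw [hfst]; rfl
  · rw [hsnd]; rfl

lemma graphBasis_eq_comp (LE LF : EuclideanSpace ℝ (Fin a) →L[ℝ] EuclideanSpace ℝ (Fin b))
    (i : Fin a) :
    graphBasis LF i = (ContinuousLinearMap.id ℝ (EucProd a b) + shear (LF - LE))
      (graphBasis LE i) := by
  rw [ContinuousLinearMap.add_apply, ContinuousLinearMap.id_apply]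
  exact graphBasis_shear LE LF i

lemma inv_comp :
    ∀ (M : EuclideanSpace ℝ (Fin a) →L[ℝ] EuclideanSpace ℝ (Fin b)),
    (ContinuousLinearMap.id ℝ (EucProd a b) - shear M).comp
      (ContinuousLinearMap.id ℝ (EucProd a b) + shear M) = ContinuousLinearMap.id ℝ _ := by
  intro M
  ext z
  simp only [ContinuousLinearMap.comp_apply, ContinuousLinearMap.add_apply,
    ContinuousLinearMap.sub_apply, ContinuousLinearMap.id_apply, map_add]
  rw [shear_shear]
  abel

end Shear


namespace Core
open Matrix
open scoped RealInnerProductSpace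
variable {a b : ℕ}

lemma psd_det_nonneg {n : ℕ} {M : Matrix (Fin n) (Fin n) ℝ} (h : M.PosSemidef) :
    0 ≤ M.det := by
  rw [h.1.det_eq_prod_eigenvalues]
  have : ∀ i ∈ Finset.univ, (0:ℝ) ≤ (h.1.eigenvalues i : ℝ) :=
    fun i _ => by exact_mod_cast h.eigenvalues_nonneg i
  exact_mod_cast Finset.prod_nonneg this

lemma det_gram_le {R : ℝ} (X : EucProd a b →L[ℝ] EucProd a b) (hXn : ‖X‖ ≤ R)
    {w : Fin a → EucProd a b} (hw : Orthonormal ℝ w) :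
    (gramMat fun i => X (w i)).det ≤ R ^ (2 * a) := by
  have h := Gram.det_comp_le X w
  rw [Gram.gram_orthonormal hw, Matrix.det_one, mul_one] at h
  calc (gramMat fun i => X (w i)).det ≤ ‖X‖ ^ (2 * a) := h
    _ ≤ R ^ (2 * a) := pow_le_pow_left₀ (norm_nonneg X) hXn _

lemma one_le_mul_det_gram {R : ℝ} (hR0 : 0 ≤ R)
    (X X' : EucProd a b →L[ℝ] EucProd a b) (hinv : ∀ z, X' (X z) = z) (hX'n : ‖X'‖ ≤ R)
    {w : Fin a → EucProd a b} (hw : Orthonormal ℝ w) :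
    1 ≤ R ^ (2 * a) * (gramMat fun i => X (w i)).det := by
  have h := Gram.det_comp_le X' (fun i => X (w i))
  rw [show (fun i => X' (X (w i))) = w from funext fun i => hinv _, Gram.gram_orthonormal hw, Matrix.det_one] at h
  have hd0 : 0 ≤ (gramMat fun i => X (w i)).det := psd_det_nonneg (Gram.posSemidef _)
  calc (1:ℝ) ≤ ‖X'‖ ^ (2 * a) * (gramMat fun i => X (w i)).det := h
    _ ≤ R ^ (2 * a) * (gramMat fun i => X (w i)).det := by
        apply mul_le_mul_of_nonneg_right (pow_le_pow_left₀ (norm_nonneg X') hX'n _) hd0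

lemma det_gram_pos {R : ℝ} (hR0 : 0 ≤ R)
    (X X' : EucProd a b →L[ℝ] EucProd a b) (hinv : ∀ z, X' (X z) = z) (hX'n : ‖X'‖ ≤ R)
    {w : Fin a → EucProd a b} (hw : Orthonormal ℝ w) :
    0 < (gramMat fun i => X (w i)).det := by
  have h := one_le_mul_det_gram hR0 X X' hinv hX'n hw
  have hd0 : 0 ≤ (gramMat fun i => X (w i)).det := psd_det_nonneg (Gram.posSemidef _)
  by_contra hcon
  push_neg at hcon
  have : (gramMat fun i => X (w i)).det = 0 := le_antisymm hcon hd0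
  rw [this, mul_zero] at h
  linarith

lemma core {R : ℝ} (hR : 1 ≤ R)
    (X X' Y Y' : EucProd a b →L[ℝ] EucProd a b)
    (hXi : ∀ z, X' (X z) = z) (hYi : ∀ z, Y' (Y z) = z)
    (hXn : ‖X‖ ≤ R) (hX'n : ‖X'‖ ≤ R) (hYn : ‖Y‖ ≤ R) (hY'n : ‖Y'‖ ≤ R)
    {w : Fin a → EucProd a b} (hw : Orthonormal ℝ w) :
    |(1/2:ℝ) * Real.log (gramMat fun i => X (w i)).det -
     (1/2:ℝ) * Real.log (gramMat fun i => Y (w i)).det| ≤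
      ((a.factorial : ℝ) * a * R ^ (4 * a + 1)) * ‖X - Y‖ := by
  have hR0 : (0:ℝ) ≤ R := le_trans zero_le_one hR
  have hRpow : (0:ℝ) < R ^ (2 * a) := by positivity
  set dX := (gramMat fun i => X (w i)).det with hdX
  set dY := (gramMat fun i => Y (w i)).det with hdY
  have hdX1 : 1 ≤ R ^ (2 * a) * dX := one_le_mul_det_gram hR0 X X' hXi hX'n hw
  have hdY1 : 1 ≤ R ^ (2 * a) * dY := one_le_mul_det_gram hR0 Y Y' hYi hY'n hw
  have hdXlow : (R ^ (2 * a))⁻¹ ≤ dX := by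
    rw [inv_le_iff_one_le_mul₀ hRpow]
    linarith
  have hdYlow : (R ^ (2 * a))⁻¹ ≤ dY := by
    rw [inv_le_iff_one_le_mul₀ hRpow]
    linarith
  -- entry bounds
  have hnormXw : ∀ i, ‖X (w i)‖ ≤ R := by
    intro i
    calc ‖X (w i)‖ ≤ ‖X‖ * ‖w i‖ := X.le_opNorm _
      _ = ‖X‖ := by rw [hw.1 i, mul_one]
      _ ≤ R := hXn
  have hnormYw : ∀ i, ‖Y (w i)‖ ≤ R := by
    intro i
    calc ‖Y (w i)‖ ≤ ‖Y‖ * ‖w i‖ := Y.le_opNorm _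
      _ = ‖Y‖ := by rw [hw.1 i, mul_one]
      _ ≤ R := hYn
  have hXentry : ∀ i j, |(gramMat fun i => X (w i)) i j| ≤ R ^ 2 := by
    intro i j
    show |(inner ℝ (X (w i)) (X (w j)) : ℝ)| ≤ R ^ 2
    calc |(inner ℝ (X (w i)) (X (w j)) : ℝ)| ≤ ‖X (w i)‖ * ‖X (w j)‖ :=
          abs_real_inner_le_norm _ _
      _ ≤ R * R := mul_le_mul (hnormXw i) (hnormXw j) (norm_nonneg _) hR0
      _ = R ^ 2 := (sq R).symm
  have hYentry : ∀ i j, |(gramMat fun i => Y (w i)) i j| ≤ R ^ 2 := by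
    intro i j
    show |(inner ℝ (Y (w i)) (Y (w j)) : ℝ)| ≤ R ^ 2
    calc |(inner ℝ (Y (w i)) (Y (w j)) : ℝ)| ≤ ‖Y (w i)‖ * ‖Y (w j)‖ :=
          abs_real_inner_le_norm _ _
      _ ≤ R * R := mul_le_mul (hnormYw i) (hnormYw j) (norm_nonneg _) hR0
      _ = R ^ 2 := (sq R).symm
  have hdiffnorm : ∀ i, ‖X (w i) - Y (w i)‖ ≤ ‖X - Y‖ := by
    intro i
    calc ‖X (w i) - Y (w i)‖ = ‖(X - Y) (w i)‖ := by rw [ContinuousLinearMap.sub_apply]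
      _ ≤ ‖X - Y‖ * ‖w i‖ := (X - Y).le_opNorm _
      _ = ‖X - Y‖ := by rw [hw.1 i, mul_one]
  have hdentry : ∀ i j, |(gramMat fun i => X (w i)) i j - (gramMat fun i => Y (w i)) i j|
      ≤ 2 * R * ‖X - Y‖ := by
    intro i j
    have hsplit : (inner ℝ (X (w i)) (X (w j)) : ℝ) - inner ℝ (Y (w i)) (Y (w j))
        = inner ℝ (X (w i) - Y (w i)) (X (w j)) + inner ℝ (Y (w i)) (X (w j) - Y (w j)) := by
      rw [inner_sub_left, inner_sub_right]
      ring
    show |(inner ℝ (X (w i)) (X (w j)) : ℝ) - inner ℝ (Y (w i)) (Y (w j))| ≤ 2 * R * ‖X - Y‖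
    rw [hsplit]
    calc |(inner ℝ (X (w i) - Y (w i)) (X (w j)) : ℝ) + inner ℝ (Y (w i)) (X (w j) - Y (w j))|
        ≤ |(inner ℝ (X (w i) - Y (w i)) (X (w j)) : ℝ)| +
          |(inner ℝ (Y (w i)) (X (w j) - Y (w j)) : ℝ)| := abs_add_le _ _
      _ ≤ ‖X (w i) - Y (w i)‖ * ‖X (w j)‖ + ‖Y (w i)‖ * ‖X (w j) - Y (w j)‖ :=
          add_le_add (abs_real_inner_le_norm _ _) (abs_real_inner_le_norm _ _)
      _ ≤ ‖X - Y‖ * R + R * ‖X - Y‖ := add_le_add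
          (mul_le_mul (hdiffnorm i) (hnormXw j) (norm_nonneg _) (norm_nonneg _))
          (mul_le_mul (hnormYw i) (hdiffnorm j) (norm_nonneg _) hR0)
      _ = 2 * R * ‖X - Y‖ := by ring
  have hdet := Aux.abs_det_sub_det_le (gramMat fun i => X (w i)) (gramMat fun i => Y (w i))
    (by positivity) (by positivity) hXentry hYentry hdentry
  have hlog := Aux.abs_log_sub_log_le (c := (R ^ (2 * a))⁻¹) (by positivity) hdXlow hdYlow
  rw [div_eq_mul_inv, inv_inv] at hlog
  have hgoal : |(1/2:ℝ) * Real.log dX - (1/2:ℝ) * Real.log dY|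
      = (1/2:ℝ) * |Real.log dX - Real.log dY| := by
    rw [← mul_sub, abs_mul]
    norm_num
  rw [hgoal]
  have hpow1 : ((R:ℝ) ^ 2) ^ (a - 1) ≤ R ^ (2 * a) := by
    rw [← pow_mul]
    apply pow_le_pow_right₀ hR
    omega
  have hfinal : |dX - dY| * R ^ (2*a) ≤
      ((a.factorial : ℝ) * a * (R ^ (2*a) * R ^ (2*a)) * (2 * R * ‖X - Y‖)) := by
    calc |dX - dY| * R ^ (2*a)
        ≤ ((a.factorial : ℝ) * a * (R^2) ^ (a - 1) * (2 * R * ‖X - Y‖)) * R ^ (2*a) := by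
          apply mul_le_mul_of_nonneg_right hdet (le_of_lt hRpow)
      _ ≤ ((a.factorial : ℝ) * a * R ^ (2*a) * (2 * R * ‖X - Y‖)) * R ^ (2*a) := by
          gcongr
      _ = (a.factorial : ℝ) * a * (R ^ (2*a) * R ^ (2*a)) * (2 * R * ‖X - Y‖) := by ring
  have hRR : R ^ (2*a) * R ^ (2*a) * R = R ^ (4 * a + 1) := by
    rw [← pow_add, ← pow_succ]
    congr 1
    omega
  calc (1/2:ℝ) * |Real.log dX - Real.log dY| ≤ (1/2:ℝ) * (|dX - dY| * R ^ (2*a)) := by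
        apply mul_le_mul_of_nonneg_left hlog (by norm_num)
    _ ≤ (1/2:ℝ) * ((a.factorial : ℝ) * a * (R ^ (2*a) * R ^ (2*a)) * (2 * R * ‖X - Y‖)) := by
        apply mul_le_mul_of_nonneg_left hfinal (by norm_num)
    _ = ((a.factorial : ℝ) * a * R ^ (4 * a + 1)) * ‖X - Y‖ := by
        rw [← hRR]
        ring

lemma logJac_eq_onb (L : EuclideanSpace ℝ (Fin a) →L[ℝ] EuclideanSpace ℝ (Fin b))
    {w : Fin a → EucProd a b} {Rm : Matrix (Fin a) (Fin a) ℝ}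
    (hw : Orthonormal ℝ w) (hdetR : Rm.det ≠ 0)
    (hrel : ∀ j, graphBasis L j = ∑ i, Rm i j • w i)
    (X : EucProd a b →L[ℝ] EucProd a b) :
    logJac X L = (1/2:ℝ) * Real.log (gramMat fun i => X (w i)).det := by
  have h1 : gramMat (fun j => X (graphBasis L j)) =
      Rmᵀ * gramMat (fun i => X (w i)) * Rm := by
    apply Gram.change_basis
    intro j
    rw [hrel j, map_sum]
    simp only [_root_.map_smul]
  have h2 : gramMat (graphBasis L) = Rmᵀ * gramMat w * Rm := Gram.change_basis Rm _ _ hrel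
  have hdet1 : (Rmᵀ * gramMat (fun i => X (w i)) * Rm).det
      = Rm.det ^ 2 * (gramMat fun i => X (w i)).det := by
    rw [Matrix.det_mul, Matrix.det_mul, Matrix.det_transpose]
    ring
  have hdet2 : (Rmᵀ * gramMat w * Rm).det = Rm.det ^ 2 := by
    rw [Gram.gram_orthonormal hw, Matrix.mul_one, Matrix.det_mul, Matrix.det_transpose, sq]
  unfold logJac
  rw [h1, h2, hdet1, hdet2, mul_div_cancel_left₀ _ (pow_ne_zero 2 hdetR)]

lemma logJac_comp_eq (L L' : EuclideanSpace ℝ (Fin a) →L[ℝ] EuclideanSpace ℝ (Fin b))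
    (T : EucProd a b →L[ℝ] EucProd a b)
    (hg : ∀ j, graphBasis L' j = T (graphBasis L j))
    {w : Fin a → EucProd a b} {Rm : Matrix (Fin a) (Fin a) ℝ}
    (hw : Orthonormal ℝ w) (hdetR : Rm.det ≠ 0)
    (hrel : ∀ j, graphBasis L j = ∑ i, Rm i j • w i)
    (X : EucProd a b →L[ℝ] EucProd a b) :
    logJac X L' = (1/2:ℝ) * Real.log
      ((gramMat fun i => X (T (w i))).det / (gramMat fun i => T (w i)).det) := by
  have hrel' : ∀ j, graphBasis L' j = ∑ i, Rm i j • T (w i) := by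
    intro j
    rw [hg j, hrel j, map_sum]
    simp only [_root_.map_smul]
  have h1 : gramMat (fun j => X (graphBasis L' j)) =
      Rmᵀ * gramMat (fun i => X (T (w i))) * Rm := by
    apply Gram.change_basis
    intro j
    rw [hrel' j, map_sum]
    simp only [_root_.map_smul]
  have h2 : gramMat (graphBasis L') = Rmᵀ * gramMat (fun i => T (w i)) * Rm :=
    Gram.change_basis Rm _ _ hrel'
  have hdet1 : (Rmᵀ * gramMat (fun i => X (T (w i))) * Rm).det
      = Rm.det ^ 2 * (gramMat fun i => X (T (w i))).det := by
    rw [Matrix.det_mul, Matrix.det_mul, Matrix.det_transpose]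
    ring
  have hdet2 : (Rmᵀ * gramMat (fun i => T (w i)) * Rm).det
      = Rm.det ^ 2 * (gramMat fun i => T (w i)).det := by
    rw [Matrix.det_mul, Matrix.det_mul, Matrix.det_transpose]
    ring
  unfold logJac
  rw [h1, h2, hdet1, hdet2]
  congr 2
  rw [mul_div_mul_left _ _ (pow_ne_zero 2 hdetR)]

end Core

/-- The restricted Jacobian `φ(A,E) = log|det(A|_E)|` is Lipschitz in `(A, E)` on
the set of maps with `‖A‖, ‖A⁻¹‖ ≤ C₀` and subspaces given as graphs. -/
theorem logJac_lipschitz (a b : ℕ) (C₀ : ℝ) (hC₀ : 0 < C₀) :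
    ∃ N : ℝ, 0 < N ∧ ∀ (A B : EucProd a b ≃L[ℝ] EucProd a b)
      (LE LF : EuclideanSpace ℝ (Fin a) →L[ℝ] EuclideanSpace ℝ (Fin b)),
      ‖(A : EucProd a b →L[ℝ] EucProd a b)‖ ≤ C₀ →
      ‖(B : EucProd a b →L[ℝ] EucProd a b)‖ ≤ C₀ →
      ‖(A.symm : EucProd a b →L[ℝ] EucProd a b)‖ ≤ C₀ →
      ‖(B.symm : EucProd a b →L[ℝ] EucProd a b)‖ ≤ C₀ →
      |logJac (A : EucProd a b →L[ℝ] EucProd a b) LE -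
          logJac (B : EucProd a b →L[ℝ] EucProd a b) LF|
        ≤ N * (‖(A : EucProd a b →L[ℝ] EucProd a b) -
            (B : EucProd a b →L[ℝ] EucProd a b)‖ + ‖LE - LF‖) := by
  classical
  set R : ℝ := 2 * max C₀ 1 with hRdef
  have hmax1 : (1:ℝ) ≤ max C₀ 1 := le_max_right _ _
  have hmaxC : C₀ ≤ max C₀ 1 := le_max_left _ _
  have hR1 : (1:ℝ) ≤ R := by rw [hRdef]; linarith
  have hR2 : (2:ℝ) ≤ R := by rw [hRdef]; linarith
  have hR0 : (0:ℝ) ≤ R := by linarith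
  have hCR : C₀ ≤ R := by rw [hRdef]; linarith
  have h2CR : C₀ * 2 ≤ R := by rw [hRdef]; linarith
  have hlogR : 0 ≤ Real.log R := Real.log_nonneg hR1
  set Ccore : ℝ := (a.factorial : ℝ) * a * R ^ (4*a+1) with hCcore
  have hCcore0 : 0 ≤ Ccore := by rw [hCcore]; positivity
  set N : ℝ := Ccore * (C₀ + 2) + 2 * a * Real.log R + 1 with hNdef
  have hN0 : 0 < N := by
    have h1 : 0 ≤ Ccore * (C₀ + 2) := mul_nonneg hCcore0 (by linarith)
    have h2 : 0 ≤ 2 * (a:ℝ) * Real.log R := by positivity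
    rw [hNdef]; linarith
  refine ⟨N, hN0, ?_⟩
  intro A B LE LF hAn hBn hAsn hBsn
  set Ac : EucProd a b →L[ℝ] EucProd a b := (A : EucProd a b →L[ℝ] EucProd a b) with hAc
  set Bc : EucProd a b →L[ℝ] EucProd a b := (B : EucProd a b →L[ℝ] EucProd a b) with hBc
  set A'c : EucProd a b →L[ℝ] EucProd a b := (A.symm : EucProd a b →L[ℝ] EucProd a b) with hA'c
  set B'c : EucProd a b →L[ℝ] EucProd a b := (B.symm : EucProd a b →L[ℝ] EucProd a b) with hB'c
  have hAinv : ∀ z, A'c (Ac z) = z := fun z => A.symm_apply_apply z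
  have hBinv : ∀ z, B'c (Bc z) = z := fun z => B.symm_apply_apply z
  set δ := ‖Ac - Bc‖ with hδ
  set ε := ‖LE - LF‖ with hε
  have hδ0 : 0 ≤ δ := norm_nonneg _
  have hε0 : 0 ≤ ε := norm_nonneg _
  clear_value δ ε
  obtain ⟨w, Rm, hw, hdetRm, hrel⟩ :=
    Aux2.exists_onb (graphBasis LE) (Aux2.graphBasis_linearIndependent LE)
  have hlogA : logJac Ac LE =
      (1/2:ℝ) * Real.log (gramMat fun i => Ac (w i)).det :=
    Core.logJac_eq_onb LE hw hdetRm hrel Ac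
  rcases le_total ε 1 with hsmall | hbig
  · -- small case
    set S := Shear.shear (LF - LE) with hS
    have hSnorm : ‖S‖ ≤ ε := by
      rw [hS]
      calc ‖Shear.shear (LF - LE)‖ ≤ ‖LF - LE‖ := Shear.norm_shear_le _
        _ = ε := by rw [hε, norm_sub_rev]
    set T := ContinuousLinearMap.id ℝ (EucProd a b) + S with hT
    set T' := ContinuousLinearMap.id ℝ (EucProd a b) - S with hT'
    have hT'T : ∀ z, T' (T z) = z := by
      intro z
      have h := Shear.inv_comp (a := a) (b := b) (LF - LE)
      have h2 := ContinuousLinearMap.ext_iff.1 h z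
      rw [ContinuousLinearMap.comp_apply, ContinuousLinearMap.id_apply] at h2
      exact h2
    have hTn : ‖T‖ ≤ 2 := by
      calc ‖T‖ ≤ ‖ContinuousLinearMap.id ℝ (EucProd a b)‖ + ‖S‖ := norm_add_le _ _
        _ ≤ 1 + 1 := add_le_add (ContinuousLinearMap.norm_id_le) (le_trans hSnorm hsmall)
        _ = 2 := by norm_num
    have hT'n : ‖T'‖ ≤ 2 := by
      calc ‖T'‖ ≤ ‖ContinuousLinearMap.id ℝ (EucProd a b)‖ + ‖S‖ := norm_sub_le _ _
        _ ≤ 1 + 1 := add_le_add (ContinuousLinearMap.norm_id_le) (le_trans hSnorm hsmall)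
        _ = 2 := by norm_num
    have hgLF : ∀ j, graphBasis LF j = T (graphBasis LE j) := by
      intro j
      rw [hT, hS]
      exact Shear.graphBasis_eq_comp LE LF j
    set BT := Bc.comp T with hBT
    set BT' := T'.comp B'c with hBT'
    have hBTinv : ∀ z, BT' (BT z) = z := by
      intro z
      rw [hBT, hBT', ContinuousLinearMap.comp_apply, ContinuousLinearMap.comp_apply,
        hBinv (T z)]
      exact hT'T z
    have hBTn : ‖BT‖ ≤ R := by
      calc ‖BT‖ ≤ ‖Bc‖ * ‖T‖ := ContinuousLinearMap.opNorm_comp_le _ _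
        _ ≤ C₀ * 2 := mul_le_mul hBn hTn (norm_nonneg _) (le_of_lt hC₀)
        _ ≤ R := h2CR
    have hBT'n : ‖BT'‖ ≤ R := by
      calc ‖BT'‖ ≤ ‖T'‖ * ‖B'c‖ := ContinuousLinearMap.opNorm_comp_le _ _
        _ ≤ 2 * C₀ := mul_le_mul hT'n hBsn (norm_nonneg _) (by norm_num)
        _ = C₀ * 2 := by ring
        _ ≤ R := h2CR
    have hdT_pos : 0 < (gramMat fun i => T (w i)).det :=
      Core.det_gram_pos hR0 T T' hT'T (le_trans hT'n hR2) hw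
    have hdBT_pos : 0 < (gramMat fun i => BT (w i)).det :=
      Core.det_gram_pos hR0 BT BT' hBTinv hBT'n hw
    have hlogBF : logJac Bc LF = (1/2:ℝ) * Real.log
        ((gramMat fun i => Bc (T (w i))).det / (gramMat fun i => T (w i)).det) :=
      Core.logJac_comp_eq LE LF T hgLF hw hdetRm hrel Bc
    have hBT_apply : (fun i => Bc (T (w i))) = (fun i => BT (w i)) := by
      funext i
      rw [hBT, ContinuousLinearMap.comp_apply]
    rw [hBT_apply] at hlogBF
    rw [Real.log_div (ne_of_gt hdBT_pos) (ne_of_gt hdT_pos)] at hlogBF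
    -- core estimates
    have c1 := Core.core hR1 Ac A'c Bc B'c hAinv hBinv
      (le_trans hAn hCR) (le_trans hAsn hCR) (le_trans hBn hCR) (le_trans hBsn hCR) hw
    have c2 := Core.core hR1 Bc B'c BT BT' hBinv hBTinv
      (le_trans hBn hCR) (le_trans hBsn hCR) hBTn hBT'n hw
    have hidinv : ∀ z : EucProd a b, (ContinuousLinearMap.id ℝ (EucProd a b))
        ((ContinuousLinearMap.id ℝ (EucProd a b)) z) = z := fun z => rfl
    have c3 := Core.core hR1 T T' (ContinuousLinearMap.id ℝ (EucProd a b))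
      (ContinuousLinearMap.id ℝ (EucProd a b)) hT'T hidinv
      (le_trans hTn hR2) (le_trans hT'n hR2)
      (le_trans ContinuousLinearMap.norm_id_le hR1)
      (le_trans ContinuousLinearMap.norm_id_le hR1) hw
    have hid_gram : (gramMat fun i => (ContinuousLinearMap.id ℝ (EucProd a b)) (w i)) = 1 := by
      rw [show (fun i => (ContinuousLinearMap.id ℝ (EucProd a b)) (w i)) = w from rfl]
      exact Gram.gram_orthonormal hw
    rw [hid_gram, Matrix.det_one, Real.log_one, mul_zero, sub_zero] at c3
    have hTsubid : ‖T - ContinuousLinearMap.id ℝ (EucProd a b)‖ ≤ ε := by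
      rw [hT, add_sub_cancel_left]
      exact hSnorm
    have hBsubBT : ‖Bc - BT‖ ≤ C₀ * ε := by
      have hcomp : BT = Bc + Bc.comp S := by
        rw [hBT, hT, ContinuousLinearMap.comp_add, ContinuousLinearMap.comp_id]
      have : Bc - BT = -(Bc.comp S) := by rw [hcomp]; abel
      rw [this, norm_neg]
      calc ‖Bc.comp S‖ ≤ ‖Bc‖ * ‖S‖ := ContinuousLinearMap.opNorm_comp_le _ _
        _ ≤ C₀ * ε := mul_le_mul hBn hSnorm (norm_nonneg _) (le_of_lt hC₀)
    rw [← hCcore] at c1 c2 c3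
    rw [← hδ] at c1
    obtain ⟨lA, hlA⟩ : ∃ x : ℝ,
        (1/2:ℝ) * Real.log (gramMat fun i => Ac (w i)).det = x := ⟨_, rfl⟩
    obtain ⟨lB, hlB⟩ : ∃ x : ℝ,
        (1/2:ℝ) * Real.log (gramMat fun i => Bc (w i)).det = x := ⟨_, rfl⟩
    obtain ⟨lBT, hlBT⟩ : ∃ x : ℝ,
        (1/2:ℝ) * Real.log (gramMat fun i => BT (w i)).det = x := ⟨_, rfl⟩
    obtain ⟨lT, hlT⟩ : ∃ x : ℝ,
        (1/2:ℝ) * Real.log (gramMat fun i => T (w i)).det = x := ⟨_, rfl⟩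
    rw [mul_sub] at hlogBF
    rw [hlA] at hlogA c1
    rw [hlB] at c1 c2
    rw [hlBT] at c2 hlogBF
    rw [hlT] at c3 hlogBF
    rw [hlogA, hlogBF]
    have habs : |lA - (lBT - lT)| ≤ |lA - lB| + |lB - lBT| + |lT| := by
      have e : lA - (lBT - lT) = (lA - lB) + (lB - lBT) + lT := by ring
      rw [e]
      calc |(lA - lB) + (lB - lBT) + lT| ≤ |(lA - lB) + (lB - lBT)| + |lT| := abs_add_le _ _
        _ ≤ |lA - lB| + |lB - lBT| + |lT| := by
            have := abs_add_le (lA - lB) (lB - lBT)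
            linarith
    have hb2 : |lB - lBT| ≤ Ccore * (C₀ * ε) := by
      calc |lB - lBT| ≤ Ccore * ‖Bc - BT‖ := c2
        _ ≤ Ccore * (C₀ * ε) := mul_le_mul_of_nonneg_left hBsubBT hCcore0
    have hb3 : |lT| ≤ Ccore * ε := by
      calc |lT| ≤ Ccore * ‖T - ContinuousLinearMap.id ℝ (EucProd a b)‖ := c3
        _ ≤ Ccore * ε := mul_le_mul_of_nonneg_left hTsubid hCcore0
    calc |lA - (lBT - lT)| ≤ Ccore * δ + Ccore * (C₀ * ε) + Ccore * ε := by
          have := add_le_add (add_le_add c1 hb2) hb3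
          linarith [habs]
      _ ≤ Ccore * (C₀ + 2) * (δ + ε) := by
          have hexp : (C₀ + 2) * (δ + ε) = C₀ * δ + 2 * δ + C₀ * ε + 2 * ε := by ring
          have hcd : 0 ≤ C₀ * δ := mul_nonneg (le_of_lt hC₀) hδ0
          have h1 : δ + C₀ * ε + ε ≤ (C₀ + 2) * (δ + ε) := by rw [hexp]; linarith
          calc Ccore * δ + Ccore * (C₀ * ε) + Ccore * ε = Ccore * (δ + C₀ * ε + ε) := by ring
            _ ≤ Ccore * ((C₀ + 2) * (δ + ε)) := mul_le_mul_of_nonneg_left h1 hCcore0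
            _ = Ccore * (C₀ + 2) * (δ + ε) := by ring
      _ ≤ N * (δ + ε) := by
          have hNge : Ccore * (C₀ + 2) ≤ N := by
            have h2 : 0 ≤ 2 * (a:ℝ) * Real.log R := by positivity
            rw [hNdef]; linarith
          exact mul_le_mul_of_nonneg_right hNge (by linarith)
  · -- big case : 1 ≤ ε
    have boundfor : ∀ (L : EuclideanSpace ℝ (Fin a) →L[ℝ] EuclideanSpace ℝ (Fin b))
        (X X' : EucProd a b →L[ℝ] EucProd a b), (∀ z, X' (X z) = z) →
        ‖X‖ ≤ R → ‖X'‖ ≤ R → |logJac X L| ≤ (a:ℝ) * Real.log R := by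
      intro L X X' hinv hXn hX'n
      obtain ⟨w2, Rm2, hw2, hdetRm2, hrel2⟩ :=
        Aux2.exists_onb (graphBasis L) (Aux2.graphBasis_linearIndependent L)
      rw [Core.logJac_eq_onb L hw2 hdetRm2 hrel2 X]
      have h1 : 1 ≤ R ^ (2*a) * (gramMat fun i => X (w2 i)).det :=
        Core.one_le_mul_det_gram hR0 X X' hinv hX'n hw2
      have h2 : (gramMat fun i => X (w2 i)).det ≤ R ^ (2*a) :=
        Core.det_gram_le X hXn hw2
      have h3 := Aux.abs_log_le hR1 h1 h2
      rw [abs_mul]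
      have : |(1/2:ℝ)| = 1/2 := by norm_num
      rw [this]
      have h4 : ((2*a : ℕ) : ℝ) * Real.log R = 2 * ((a:ℝ) * Real.log R) := by
        push_cast; ring
      rw [h4] at h3
      linarith
    have bA : |logJac Ac LE| ≤ (a:ℝ) * Real.log R :=
      boundfor LE Ac A'c hAinv (le_trans hAn hCR) (le_trans hAsn hCR)
    have bB : |logJac Bc LF| ≤ (a:ℝ) * Real.log R :=
      boundfor LF Bc B'c hBinv (le_trans hBn hCR) (le_trans hBsn hCR)
    have htri : |logJac Ac LE - logJac Bc LF| ≤ 2 * ((a:ℝ) * Real.log R) := by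
      have := abs_sub (logJac Ac LE) (logJac Bc LF)
      calc |logJac Ac LE - logJac Bc LF| ≤ |logJac Ac LE| + |logJac Bc LF| := abs_sub _ _
        _ ≤ 2 * ((a:ℝ) * Real.log R) := by linarith
    have hNbig : 2 * ((a:ℝ) * Real.log R) ≤ N * (δ + ε) := by
      have h1 : 0 ≤ Ccore * (C₀ + 2) := mul_nonneg hCcore0 (by linarith)
      have h2 : 2 * ((a:ℝ) * Real.log R) ≤ N := by rw [hNdef]; linarith
      have h3 : (1:ℝ) ≤ δ + ε := by linarith
      calc 2 * ((a:ℝ) * Real.log R) ≤ N := h2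
        _ = N * 1 := by ring
        _ ≤ N * (δ + ε) := mul_le_mul_of_nonneg_left h3 (le_of_lt hN0)
    linarith

end
end
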